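/- For every positive integer n, the complete graph K_{2n+1} can be decomposed into n edge-disjoint Hamiltonian cycles; in particular, the edge set of K_{2n+1} is a disjoint union of n sets, each forming a cycle through all 2n+1 vertices. -/

import Mathlib

namespace CGHD

open SimpleGraph List

variable {V : Type*}

/-- Build a walk in the complete graph from a start vertex, a list of intermediate
vertices, and an end vertex, given that consecutive vertices differ. -/
def mkW : (v : V) → (l : List V) → (u : V) →
    List.Chain (· ≠ ·) v (l ++ [u]) → (⊤ : SimpleGraph V).Walk v u
  | v, [], u, h => SimpleGraph.Walk.cons
      (by rw [List.nil_append] at h; unfold List.Chain at h; rw [List.isChain_pair] at h; simpa using h) SimpleGraph.Walk.nil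
  | v, a :: l, u, h => SimpleGraph.Walk.cons
      (by rw [List.cons_append] at h; unfold List.Chain at h; rw [List.isChain_cons_cons] at h; simpa using h.1)
      (mkW a l u (by rw [List.cons_append] at h; unfold List.Chain at h; rw [List.isChain_cons_cons] at h; exact h.2))

lemma support_mkW : ∀ (v : V) (l : List V) (u : V) (h : List.Chain (· ≠ ·) v (l ++ [u])),
    (mkW v l u h).support = v :: (l ++ [u])
  | v, [], u, h => by simp [mkW]
  | v, a :: l, u, h => by
    simp [mkW, support_mkW a l u]
    exact support_mkW a l u _

lemma edges_mkW : ∀ (v : V) (l : List V) (u : V) (h : List.Chain (· ≠ ·) v (l ++ [u])),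
    (mkW v l u h).edges = List.zipWith (fun a b => s(a, b)) (v :: (l ++ [u])) (l ++ [u])
  | v, [], u, h => by simp [mkW]
  | v, a :: l, u, h => by
    simp [mkW, edges_mkW a l u]
    exact edges_mkW a l u _

section

variable (n : ℕ) [NeZero (2 * n)]

/-- The hub vertex. -/
def hub : Fin (2 * n + 1) := ⟨2 * n, by omega⟩

/-- Embedding of `ZMod (2*n)` into the vertex set. -/
def toV (x : ZMod (2 * n)) : Fin (2 * n + 1) := ⟨x.val, by have := ZMod.val_lt x; omega⟩

lemma toV_ne_hub (x : ZMod (2 * n)) : toV n x ≠ hub n := by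
  have := ZMod.val_lt x
  simp only [toV, hub, Ne, Fin.mk.injEq]
  omega

lemma toV_inj {x y : ZMod (2 * n)} (h : toV n x = toV n y) : x = y := by
  apply ZMod.val_injective
  simpa [toV, Fin.mk.injEq] using h

/-- The zig-zag sequence `0, 1, -1, 2, -2, …, n-1, -(n-1), n` in `ZMod (2*n)`. -/
def zig (k : ℕ) : ZMod (2 * n) := if k % 2 = 0 then -((k / 2 : ℕ) : ZMod (2 * n))
  else ((k / 2 + 1 : ℕ) : ZMod (2 * n))

/-- The k-th inner vertex of the i-th cycle. -/
def vtx (i : ZMod (2 * n)) (k : ℕ) : Fin (2 * n + 1) := toV n (i + zig n k)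

/-- The inner vertex list of the i-th cycle. -/
def inner (i : ZMod (2 * n)) : List (Fin (2 * n + 1)) := (List.range (2 * n)).map (vtx n i)

/-- The k-th edge of the i-th cycle, `0 ≤ k ≤ 2*n`. -/
def allE (i : ZMod (2 * n)) (k : ℕ) : Sym2 (Fin (2 * n + 1)) :=
  if k = 0 then s(hub n, vtx n i 0)
  else if k = 2 * n then s(vtx n i (2 * n - 1), hub n)
  else s(vtx n i (k - 1), vtx n i k)

lemma npos : 0 < n := by
  have := NeZero.pos (2 * n); omega

lemma zig_val (k : ℕ) (hk : k < 2 * n) : (zig n k).val =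
    if k % 2 = 0 then (if k = 0 then 0 else 2 * n - k / 2) else k / 2 + 1 := by
  have hn := npos n
  have h2 : k / 2 < 2 * n := by omega
  have h3 : k / 2 + 1 < 2 * n := by omega
  by_cases hpar : k % 2 = 0
  · have hz : ((k / 2 : ℕ) : ZMod (2 * n)) = 0 ↔ k / 2 = 0 := by
      rw [← ZMod.val_eq_zero, ZMod.val_cast_of_lt h2]
    rw [zig, if_pos hpar, if_pos hpar, ZMod.neg_val, ZMod.val_cast_of_lt h2]
    by_cases h0 : k = 0
    · rw [if_pos h0, if_pos (hz.mpr (by omega))]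
    · rw [if_neg h0, if_neg (fun h => by have := hz.mp h; omega)]
  · rw [zig, if_neg hpar, if_neg hpar, ZMod.val_cast_of_lt h3]

lemma zig_inj {k k' : ℕ} (hk : k < 2 * n) (hk' : k' < 2 * n) (h : zig n k = zig n k') :
    k = k' := by
  have hn := npos n
  have hv := congrArg ZMod.val h
  rw [zig_val n k hk, zig_val n k' hk'] at hv
  split_ifs at hv <;> omega

lemma zig_zero' : zig n 0 = 0 := by simp [zig]

lemma zig_surj (c : ZMod (2 * n)) : ∃ k < 2 * n, zig n k = c := by
  have hn := npos n
  have hcv : c.val < 2 * n := c.val_lt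
  have hc : ((c.val : ℕ) : ZMod (2 * n)) = c := ZMod.natCast_rightInverse c
  by_cases h0 : c.val = 0
  · refine ⟨0, by omega, ?_⟩
    rw [zig_zero']
    have : c = ((c.val : ℕ) : ZMod (2 * n)) := hc.symm
    rw [this, h0]; simp
  · by_cases h1 : c.val ≤ n
    · refine ⟨2 * c.val - 1, by omega, ?_⟩
      rw [zig, if_neg (by omega)]
      have : (2 * c.val - 1) / 2 + 1 = c.val := by omega
      rw [this, hc]
    · refine ⟨2 * (2 * n - c.val), by omega, ?_⟩
      rw [zig, if_pos (by omega)]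
      have h4 : (2 * (2 * n - c.val)) / 2 = 2 * n - c.val := by omega
      rw [h4]
      have h5 : ((2 * n - c.val : ℕ) : ZMod (2 * n)) = -c := by
        rw [Nat.cast_sub (le_of_lt hcv), hc, ZMod.natCast_self]
        ring
      rw [h5, neg_neg]

lemma zig_zero : zig n 0 = 0 := by simp [zig]

lemma zig_last (hn : 0 < n) : zig n (2 * n - 1) = ((n : ℕ) : ZMod (2 * n)) := by
  have h2 : (2 * n - 1) / 2 + 1 = n := by omega
  rw [zig, if_neg (by omega), h2]

lemma zig_sum (k : ℕ) : zig n k + zig n (k + 1) =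
    if k % 2 = 0 then (1 : ZMod (2 * n)) else 0 := by
  by_cases h : k % 2 = 0
  · have e1 : (k + 1) / 2 = k / 2 := by omega
    rw [zig, zig, if_pos h, if_neg (by omega), if_pos h, e1]
    push_cast
    ring
  · have e1 : (k + 1) / 2 = k / 2 + 1 := by omega
    rw [zig, zig, if_neg h, if_pos (by omega), if_neg h, e1]
    push_cast
    ring

lemma vtx_inj (i : ZMod (2 * n)) {k k' : ℕ} (hk : k < 2 * n) (hk' : k' < 2 * n)
    (h : vtx n i k = vtx n i k') : k = k' := by
  have := add_left_cancel (toV_inj n h)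
  exact zig_inj n hk hk' this

lemma vtx_ne_hub (i : ZMod (2 * n)) (k : ℕ) : vtx n i k ≠ hub n := toV_ne_hub n _

lemma length_innerh (i : ZMod (2 * n)) : (inner n i ++ [hub n]).length = 2 * n + 1 := by
  simp [inner]

lemma getL (i : ZMod (2 * n)) (k : ℕ) (h : k < (inner n i ++ [hub n]).length) :
    (inner n i ++ [hub n])[k] = if k < 2 * n then vtx n i k else hub n := by
  rw [length_innerh] at h
  by_cases hk : k < 2 * n
  · rw [if_pos hk, List.getElem_append_left (by simpa [inner] using hk)]
    simp [inner]
  · have hk2 : k = 2 * n := by omega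
    subst hk2
    rw [if_neg hk, List.getElem_append_right (by simp [inner])]
    simp [inner]

omit [NeZero (2 * n)] in
lemma chain_iff_get' {α : Type*} {R : α → α → Prop} {a : α} {l : List α} :
    List.Chain R a l ↔ (∀ h : 0 < length l, R a (get l ⟨0, h⟩)) ∧
      ∀ (i : ℕ) (h : i < length l - 1),
        R (get l ⟨i, by omega⟩) (get l ⟨i+1, by omega⟩) := by
  unfold List.Chain
  rw [List.isChain_iff_getElem]
  constructor
  · intro H
    exact ⟨fun h => H 0 (by simp; omega), fun i h => H (i + 1) (by simp; omega)⟩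
  · rintro ⟨H0, H⟩ i hi
    cases i with
    | zero => exact H0 (by simp at hi; omega)
    | succ i => exact H i (by simp at hi; omega)

lemma chain_inner (i : ZMod (2 * n)) (hn : 0 < n) :
    List.Chain (· ≠ ·) (hub n) (inner n i ++ [hub n]) := by
  rw [chain_iff_get']
  constructor
  · intro h
    rw [List.get_eq_getElem, getL n i 0 (by rw [length_innerh]; omega)]
    rw [if_pos (by omega)]
    exact (vtx_ne_hub n i 0).symm
  · intro k hk
    rw [length_innerh] at hk
    simp only [List.get_eq_getElem]
    rw [getL n i k (by rw [length_innerh]; omega),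
      getL n i (k + 1) (by rw [length_innerh]; omega)]
    rw [if_pos (by omega : k < 2 * n)]
    by_cases hk1 : k + 1 < 2 * n
    · rw [if_pos hk1]
      intro h
      have := vtx_inj n i (by omega) hk1 h
      omega
    · rw [if_neg hk1]
      exact vtx_ne_hub n i k

/-- The i-th Hamiltonian cycle. -/
def cyc (i : ZMod (2 * n)) (hn : 0 < n) :
    (⊤ : SimpleGraph (Fin (2 * n + 1))).Walk (hub n) (hub n) :=
  mkW (hub n) (inner n i) (hub n) (chain_inner n i hn)

lemma edges_cyc (i : ZMod (2 * n)) (hn : 0 < n) :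
    (cyc n i hn).edges = (List.range (2 * n + 1)).map (allE n i) := by
  rw [cyc, edges_mkW]
  apply List.ext_getElem
  · simp [inner]
  · intro k h1 h2
    simp only [List.length_zipWith, List.length_cons, length_innerh, List.length_map,
      List.length_range, Nat.min_def] at h1 h2
    have hk : k < 2 * n + 1 := by omega
    rw [List.getElem_zipWith, List.getElem_map, List.getElem_range]
    rcases Nat.eq_zero_or_pos k with rfl | hk0
    · rw [List.getElem_cons_zero, getL n i 0 (by rw [length_innerh]; omega),
        allE, if_pos rfl, if_pos (by omega)]
    · obtain ⟨m, rfl⟩ : ∃ m, k = m + 1 := ⟨k - 1, by omega⟩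
      rw [List.getElem_cons_succ, getL n i m (by rw [length_innerh]; omega),
        getL n i (m + 1) (by rw [length_innerh]; omega)]
      rw [if_pos (by omega : m < 2 * n)]
      by_cases hm : m + 1 < 2 * n
      · rw [if_pos hm, allE, if_neg (by omega), if_neg (by omega)]
        simp
      · have h5 : m + 1 = 2 * n := by omega
        have h6 : m = 2 * n - 1 := by omega
        rw [if_neg hm, allE, h5, if_neg (by omega), if_pos rfl, h6]

lemma mem_edges_cyc {i : ZMod (2 * n)} {hn : 0 < n} {e : Sym2 (Fin (2 * n + 1))} :
    e ∈ (cyc n i hn).edges ↔ ∃ k ≤ 2 * n, e = allE n i k := by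
  rw [edges_cyc]
  simp only [List.mem_map, List.mem_range]
  constructor
  · rintro ⟨k, hk, rfl⟩; exact ⟨k, by omega, rfl⟩
  · rintro ⟨k, hk, rfl⟩; exact ⟨k, by omega, rfl⟩

lemma allE_zero (i : ZMod (2 * n)) : allE n i 0 = s(hub n, vtx n i 0) := by
  rw [allE, if_pos rfl]

lemma allE_last (i : ZMod (2 * n)) (hn : 0 < n) :
    allE n i (2 * n) = s(vtx n i (2 * n - 1), hub n) := by
  rw [allE, if_neg (by omega), if_pos rfl]

lemma allE_mid (i : ZMod (2 * n)) {k : ℕ} (h1 : 0 < k) (h2 : k < 2 * n) :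
    allE n i k = s(vtx n i (k - 1), vtx n i k) := by
  rw [allE, if_neg (by omega), if_neg (by omega)]

lemma allE_inj (i : ZMod (2 * n)) {k k' : ℕ} (hk : k ≤ 2 * n) (hk' : k' ≤ 2 * n)
    (h : allE n i k = allE n i k') : k = k' := by
  have hn := npos n
  have hne : ∀ j, vtx n i j ≠ hub n := vtx_ne_hub n i
  have key : ∀ a b : ℕ, a ≤ 2 * n → b ≤ 2 * n → a ≤ b → allE n i a = allE n i b → a = b := by
    intro a b ha hb hle hab
    rcases Nat.eq_zero_or_pos a with rfl | ha0
    · rcases Nat.eq_zero_or_pos b with rfl | hb0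
      · rfl
      · rcases eq_or_ne b (2 * n) with rfl | hb2
        · rw [allE_zero, allE_last n i hn, Sym2.eq_iff] at hab
          rcases hab with ⟨h1, h2⟩ | ⟨h1, h2⟩
          · exact absurd h1 (hne _).symm
          · have := vtx_inj n i (by omega) (by omega) h2
            omega
        · rw [allE_zero, allE_mid n i hb0 (by omega), Sym2.eq_iff] at hab
          rcases hab with ⟨h1, h2⟩ | ⟨h1, h2⟩
          · exact absurd h1.symm (hne _)
          · exact absurd h1.symm (hne _)
    · rcases eq_or_ne a (2 * n) with rfl | ha2
      · omega
      · rcases eq_or_ne b (2 * n) with rfl | hb2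
        · rw [allE_mid n i ha0 (by omega), allE_last n i hn, Sym2.eq_iff] at hab
          rcases hab with ⟨h1, h2⟩ | ⟨h1, h2⟩
          · exact absurd h2 (hne _)
          · exact absurd h1 (hne _)
        · have hb0 : 0 < b := by omega
          rw [allE_mid n i ha0 (by omega), allE_mid n i hb0 (by omega), Sym2.eq_iff] at hab
          rcases hab with ⟨h1, h2⟩ | ⟨h1, h2⟩
          · exact vtx_inj n i (by omega) (by omega) h2
          · have e1 := vtx_inj n i (by omega) (by omega) h1
            have e2 := vtx_inj n i (by omega) (by omega) h2
            omega
  rcases Nat.le_total k k' with hle | hle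
  · exact key k k' hk hk' hle h
  · exact (key k' k hk' hk hle h.symm).symm

lemma support_cyc (i : ZMod (2 * n)) (hn : 0 < n) :
    (cyc n i hn).support = hub n :: (inner n i ++ [hub n]) := support_mkW _ _ _ _

lemma innerh_nodup (i : ZMod (2 * n)) : (inner n i ++ [hub n]).Nodup := by
  rw [List.nodup_append]
  refine ⟨?_, List.nodup_singleton _, ?_⟩
  · rw [inner]
    refine List.Nodup.map_on ?_ List.nodup_range
    intro k hk k' hk' h
    exact vtx_inj n i (List.mem_range.mp hk) (List.mem_range.mp hk') h
  · rintro a ha _ hb rfl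
    rw [List.mem_singleton] at hb
    subst hb
    rw [inner, List.mem_map] at ha
    obtain ⟨k, _, hk⟩ := ha
    exact vtx_ne_hub n i k hk

lemma mem_innerh (i : ZMod (2 * n)) (a : Fin (2 * n + 1)) : a ∈ inner n i ++ [hub n] := by
  by_cases ha : a = hub n
  · subst ha
    simp
  · have hav : (a : ℕ) < 2 * n := by
      have h1 := a.isLt
      have h2 : (a : ℕ) ≠ 2 * n := fun h => ha (Fin.ext h)
      omega
    obtain ⟨k, hk, hzk⟩ := zig_surj n ((((a : ℕ) : ZMod (2 * n))) - i)
    refine List.mem_append_left _ ?_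
    rw [inner]
    refine List.mem_map.mpr ⟨k, List.mem_range.mpr hk, ?_⟩
    rw [vtx, hzk]
    have h3 : i + ((((a : ℕ) : ZMod (2 * n))) - i) = (((a : ℕ) : ZMod (2 * n))) := by ring
    rw [h3, toV]
    exact Fin.ext (by simpa using ZMod.val_cast_of_lt hav)

lemma isHamiltonianCycle_cyc (i : ZMod (2 * n)) (hn : 0 < n) :
    (cyc n i hn).IsHamiltonianCycle := by
  rw [SimpleGraph.Walk.isHamiltonianCycle_iff_isCycle_and_support_count_tail_eq_one]
  constructor
  · rw [SimpleGraph.Walk.isCycle_def]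
    refine ⟨?_, ?_, ?_⟩
    · rw [SimpleGraph.Walk.isTrail_def, edges_cyc]
      refine List.Nodup.map_on ?_ List.nodup_range
      intro k hk k' hk' h
      rw [List.mem_range] at hk hk'
      exact allE_inj n i (by omega) (by omega) h
    · intro hnil
      have h1 := congrArg List.length (edges_cyc n i hn)
      rw [hnil] at h1
      simp at h1
    · rw [support_cyc, List.tail_cons]
      exact innerh_nodup n i
  · intro a
    rw [support_cyc, List.tail_cons]
    exact List.count_eq_one_of_mem (innerh_nodup n i) (mem_innerh n i a)

lemma vtx_zero (i : ZMod (2 * n)) : vtx n i 0 = toV n i := by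
  rw [vtx, zig_zero', add_zero]

lemma vtx_last (i : ZMod (2 * n)) (hn : 0 < n) :
    vtx n i (2 * n - 1) = toV n (i + ((n : ℕ) : ZMod (2 * n))) := by
  rw [vtx, zig_last n hn]

lemma val_natCast_n (hn : 0 < n) : (((n : ℕ) : ZMod (2 * n))).val = n :=
  ZMod.val_cast_of_lt (by omega)

lemma val_add_n {c : ZMod (2 * n)} (hc : c.val < n) (hn : 0 < n) :
    (c + ((n : ℕ) : ZMod (2 * n))).val = c.val + n := by
  rw [ZMod.val_add, val_natCast_n n hn, Nat.mod_eq_of_lt (by omega)]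

lemma val_two_add (c : ZMod (2 * n)) (e : ℕ) (hc : c.val < n) (he : e ≤ 1) :
    (2 * c + ((e : ℕ) : ZMod (2 * n))).val = 2 * c.val + e := by
  have h1 : (2 * c + ((e : ℕ) : ZMod (2 * n))) = ((2 * c.val + e : ℕ) : ZMod (2 * n)) := by
    have h2 : ((c.val : ℕ) : ZMod (2 * n)) = c := ZMod.natCast_rightInverse c
    push_cast
    rw [h2]
  rw [h1, ZMod.val_cast_of_lt (by omega)]

lemma allE_disjoint {i j : ZMod (2 * n)} (hn : 0 < n) (hi : i.val < n) (hj : j.val < n)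
    (hij : i ≠ j) {k k' : ℕ} (hk : k ≤ 2 * n) (hk' : k' ≤ 2 * n) :
    allE n i k ≠ allE n j k' := by
  intro h
  have hnej : ∀ m, vtx n j m ≠ hub n := vtx_ne_hub n j
  have hnei : ∀ m, vtx n i m ≠ hub n := vtx_ne_hub n i
  have hvij : i.val ≠ j.val := fun hv => hij (ZMod.val_injective _ hv)
  rcases Nat.eq_zero_or_pos k with rfl | hk0
  · rcases Nat.eq_zero_or_pos k' with rfl | hk0'
    · rw [allE_zero, allE_zero, vtx_zero, vtx_zero, Sym2.eq_iff] at h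
      rcases h with ⟨h1, h2⟩ | ⟨h1, h2⟩
      · exact hij (toV_inj n h2)
      · exact (toV_ne_hub n j) h1.symm
    · rcases eq_or_ne k' (2 * n) with rfl | hk2'
      · rw [allE_zero, allE_last n j hn, vtx_zero, vtx_last n j hn, Sym2.eq_iff] at h
        rcases h with ⟨h1, h2⟩ | ⟨h1, h2⟩
        · exact (toV_ne_hub n _) h1.symm
        · have h3 := congrArg ZMod.val (toV_inj n h2)
          rw [val_add_n n hj hn] at h3
          omega
      · rw [allE_zero, allE_mid n j hk0' (by omega), Sym2.eq_iff] at h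
        rcases h with ⟨h1, h2⟩ | ⟨h1, h2⟩ <;> [exact (hnej _) h1.symm; exact (hnej _) h1.symm]
  · rcases eq_or_ne k (2 * n) with rfl | hk2
    · rcases Nat.eq_zero_or_pos k' with rfl | hk0'
      · rw [allE_last n i hn, allE_zero, vtx_zero, vtx_last n i hn, Sym2.eq_iff] at h
        rcases h with ⟨h1, h2⟩ | ⟨h1, h2⟩
        · exact (toV_ne_hub n _) h1
        · have h3 := congrArg ZMod.val (toV_inj n h1)
          rw [val_add_n n hi hn] at h3
          omega
      · rcases eq_or_ne k' (2 * n) with rfl | hk2'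
        · rw [allE_last n i hn, allE_last n j hn, vtx_last n i hn, vtx_last n j hn,
            Sym2.eq_iff] at h
          rcases h with ⟨h1, h2⟩ | ⟨h1, h2⟩
          · exact hij (add_right_cancel (toV_inj n h1))
          · exact (toV_ne_hub n _) h1
        · rw [allE_last n i hn, allE_mid n j hk0' (by omega), Sym2.eq_iff] at h
          rcases h with ⟨h1, h2⟩ | ⟨h1, h2⟩ <;> exact (hnej _) h2.symm
    · rcases Nat.eq_zero_or_pos k' with rfl | hk0'
      · rw [allE_mid n i hk0 (by omega), allE_zero, Sym2.eq_iff] at h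
        rcases h with ⟨h1, h2⟩ | ⟨h1, h2⟩ <;> [exact (hnei _) h1; exact (hnei _) h2]
      · rcases eq_or_ne k' (2 * n) with rfl | hk2'
        · rw [allE_mid n i hk0 (by omega), allE_last n j hn, Sym2.eq_iff] at h
          rcases h with ⟨h1, h2⟩ | ⟨h1, h2⟩ <;> [exact (hnei _) h2; exact (hnei _) h1]
        · rw [allE_mid n i hk0 (by omega), allE_mid n j hk0' (by omega), Sym2.eq_iff] at h
          have hk1 : k - 1 + 1 = k := by omega
          have hk1' : k' - 1 + 1 = k' := by omega
          have hs : zig n (k - 1) + zig n k =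
              if (k - 1) % 2 = 0 then (1 : ZMod (2 * n)) else 0 := by
            have := zig_sum n (k - 1); rwa [hk1] at this
          have hs' : zig n (k' - 1) + zig n k' =
              if (k' - 1) % 2 = 0 then (1 : ZMod (2 * n)) else 0 := by
            have := zig_sum n (k' - 1); rwa [hk1'] at this
          have hsum : 2 * i + (zig n (k - 1) + zig n k) =
              2 * j + (zig n (k' - 1) + zig n k') := by
            rcases h with ⟨h1, h2⟩ | ⟨h1, h2⟩
            · have e1 := toV_inj n h1
              have e2 := toV_inj n h2
              linear_combination e1 + e2
            · have e1 := toV_inj n h1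
              have e2 := toV_inj n h2
              linear_combination e1 + e2
          rw [hs, hs'] at hsum
          set eN : ℕ := if (k - 1) % 2 = 0 then 1 else 0 with heN
          set eN' : ℕ := if (k' - 1) % 2 = 0 then 1 else 0 with heN'
          have hcast : ((eN : ℕ) : ZMod (2 * n)) =
              (if (k - 1) % 2 = 0 then (1 : ZMod (2 * n)) else 0) := by
            rw [heN]; split_ifs <;> simp
          have hcast' : ((eN' : ℕ) : ZMod (2 * n)) =
              (if (k' - 1) % 2 = 0 then (1 : ZMod (2 * n)) else 0) := by
            rw [heN']; split_ifs <;> simp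
          have he : eN ≤ 1 := by rw [heN]; split_ifs <;> omega
          have he' : eN' ≤ 1 := by rw [heN']; split_ifs <;> omega
          have key : (2 * i + ((eN : ℕ) : ZMod (2 * n))).val =
              (2 * j + ((eN' : ℕ) : ZMod (2 * n))).val := by
            rw [hcast, hcast', hsum]
          rw [val_two_add n i eN hi he, val_two_add n j eN' hj he'] at key
          omega


lemma castval (c : ZMod (2 * n)) : ((c.val : ℕ) : ZMod (2 * n)) = c :=
  ZMod.natCast_rightInverse c

lemma zig_odd (t : ℕ) : zig n (2 * t + 1) = ((t + 1 : ℕ) : ZMod (2 * n)) := by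
  rw [zig, if_neg (by omega)]
  congr 1
  omega

lemma zig_even (t : ℕ) : zig n (2 * t) = -((t : ℕ) : ZMod (2 * n)) := by
  rw [zig, if_pos (by omega)]
  congr 2
  omega

lemma cast_two_sub (c : ZMod (2 * n)) : ((2 * n - c.val : ℕ) : ZMod (2 * n)) = -c := by
  rw [Nat.cast_sub (le_of_lt c.val_lt), ZMod.natCast_self, castval]
  ring

lemma exists_allE_hub (hn : 0 < n) (b : Fin (2 * n + 1)) (hb : b ≠ hub n) :
    ∃ i : ZMod (2 * n), i.val < n ∧ ∃ k ≤ 2 * n, s(hub n, b) = allE n i k := by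
  have hb1 := b.isLt
  have hb2 : (b : ℕ) ≠ 2 * n := fun h => hb (Fin.ext h)
  have hbv : (b : ℕ) < 2 * n := by omega
  set x : ZMod (2 * n) := ((b : ℕ) : ZMod (2 * n)) with hx
  have hxv : x.val = (b : ℕ) := ZMod.val_cast_of_lt hbv
  have hxb : toV n x = b := Fin.ext (by simp [toV, hxv])
  by_cases hsm : x.val < n
  · exact ⟨x, hsm, 0, by omega, by rw [allE_zero, vtx_zero, hxb]⟩
  · set i : ZMod (2 * n) := ((x.val - n : ℕ) : ZMod (2 * n)) with hi
    have hxlt := x.val_lt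
    have hiv : i.val = x.val - n := ZMod.val_cast_of_lt (by omega)
    have hin : i + ((n : ℕ) : ZMod (2 * n)) = x := by
      rw [hi, ← Nat.cast_add, show x.val - n + n = x.val from by omega, castval]
    refine ⟨i, by omega, 2 * n, le_refl _, ?_⟩
    rw [allE_last n i hn, vtx_last n i hn, hin, hxb, Sym2.eq_swap]

lemma exists_allE_inner (hn : 0 < n) {x y : ZMod (2 * n)} (hxy : x ≠ y) :
    ∃ i : ZMod (2 * n), i.val < n ∧ ∃ k ≤ 2 * n, s(toV n x, toV n y) = allE n i k := by
  set σ : ZMod (2 * n) := x + y with hσ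
  set i : ZMod (2 * n) := ((σ.val / 2 : ℕ) : ZMod (2 * n)) with hi
  have hσv := σ.val_lt
  have hiv : i.val = σ.val / 2 := ZMod.val_cast_of_lt (by omega)
  have hilt : i.val < n := by omega
  have hsum : 2 * i + ((σ.val % 2 : ℕ) : ZMod (2 * n)) = x + y := by
    have h2 : 2 * (σ.val / 2) + σ.val % 2 = σ.val := Nat.div_add_mod _ _
    have h4 : ((2 * (σ.val / 2) + σ.val % 2 : ℕ) : ZMod (2 * n)) = x + y := by
      rw [h2, castval]
    rw [← h4]
    push_cast
    try rw [← hi]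
    try ring
  set c : ZMod (2 * n) := x - i with hc
  have hxc : x = i + c := by rw [hc]; ring
  by_cases hpar : σ.val % 2 = 0
  · have h3 : x + y = 2 * i := by rw [← hsum, hpar]; norm_num
    have hyc : y = i - c := by linear_combination h3 - hxc
    have hc0 : c ≠ 0 := by
      intro h0
      apply hxy
      rw [hxc, hyc, h0]
      ring
    have hcv1 : 1 ≤ c.val := Nat.pos_of_ne_zero (fun h => hc0 ((ZMod.val_eq_zero c).mp h))
    have hcvlt := c.val_lt
    have hcn : c.val ≠ n := by
      intro hcn
      apply hxy
      have h5 : ((n : ℕ) : ZMod (2 * n)) + ((n : ℕ) : ZMod (2 * n)) = 0 := by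
        rw [← Nat.cast_add, show n + n = 2 * n from by ring, ZMod.natCast_self]
      have hcc : -c = c := by
        rw [← castval n c, hcn]
        linear_combination -h5
      rw [hxc, hyc]
      linear_combination -hcc
    by_cases hsmall : c.val < n
    · refine ⟨i, hilt, 2 * c.val, by omega, ?_⟩
      rw [allE_mid n i (by omega) (by omega)]
      have e2 : vtx n i (2 * c.val - 1) = toV n x := by
        rw [vtx, show 2 * c.val - 1 = 2 * (c.val - 1) + 1 from by omega, zig_odd,
          show c.val - 1 + 1 = c.val from by omega, castval, ← hxc]
      have e3 : vtx n i (2 * c.val) = toV n y := by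
        rw [vtx, zig_even, castval, hyc]
        congr 1
        ring
      rw [e2, e3]
    · set t : ℕ := 2 * n - c.val with ht
      have hct : ((t : ℕ) : ZMod (2 * n)) = -c := cast_two_sub n c
      refine ⟨i, hilt, 2 * t, by omega, ?_⟩
      rw [allE_mid n i (by omega) (by omega)]
      have e2 : vtx n i (2 * t - 1) = toV n y := by
        rw [vtx, show 2 * t - 1 = 2 * (t - 1) + 1 from by omega, zig_odd,
          show t - 1 + 1 = t from by omega, hct, hyc]
        congr 1
        ring
      have e3 : vtx n i (2 * t) = toV n x := by
        rw [vtx, zig_even, hct, neg_neg, ← hxc]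
      rw [e2, e3, Sym2.eq_swap]
  · have hpar1 : σ.val % 2 = 1 := by omega
    have h3 : x + y = 2 * i + 1 := by rw [← hsum, hpar1]; norm_num
    have hyc : y = i + 1 - c := by linear_combination h3 - hxc
    have hcvlt := c.val_lt
    by_cases hc0 : c.val = 0
    · have hcc : c = 0 := (ZMod.val_eq_zero c).mp hc0
      refine ⟨i, hilt, 1, by omega, ?_⟩
      rw [allE_mid n i one_pos (by omega), show (1 : ℕ) - 1 = 0 from rfl, vtx_zero]
      have e2 : vtx n i 1 = toV n y := by
        have hzig1 : zig n 1 = ((1 : ℕ) : ZMod (2 * n)) := by simpa using zig_odd n 0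
        rw [vtx, hzig1, hyc]
        congr 1
        rw [hcc]
        push_cast
        ring
      rw [e2]
      congr 1
      rw [hxc, hcc, add_zero]
    · by_cases hsm : c.val ≤ n
      · set j : ℕ := c.val - 1 with hj
        have hcj : ((j + 1 : ℕ) : ZMod (2 * n)) = c := by
          rw [show j + 1 = c.val from by omega, castval]
        refine ⟨i, hilt, 2 * j + 1, by omega, ?_⟩
        rw [allE_mid n i (by omega) (by omega), show 2 * j + 1 - 1 = 2 * j from by omega]
        have e2 : vtx n i (2 * j) = toV n y := by
          rw [vtx, zig_even]
          have h9 : ((j : ℕ) : ZMod (2 * n)) = c - 1 := by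
            have := hcj
            push_cast at this
            linear_combination this
          rw [h9, hyc]
          congr 1
          ring
        have e3 : vtx n i (2 * j + 1) = toV n x := by
          rw [vtx, zig_odd, hcj, ← hxc]
        rw [e2, e3, Sym2.eq_swap]
      · set t : ℕ := 2 * n - c.val with ht
        have hct : ((t : ℕ) : ZMod (2 * n)) = -c := cast_two_sub n c
        refine ⟨i, hilt, 2 * t + 1, by omega, ?_⟩
        rw [allE_mid n i (by omega) (by omega), show 2 * t + 1 - 1 = 2 * t from by omega]
        have e2 : vtx n i (2 * t) = toV n x := by
          rw [vtx, zig_even, hct, neg_neg, ← hxc]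
        have e3 : vtx n i (2 * t + 1) = toV n y := by
          rw [vtx, zig_odd]
          have h8 : ((t + 1 : ℕ) : ZMod (2 * n)) = 1 - c := by
            push_cast
            rw [hct]
            ring
          rw [h8, hyc]
          congr 1
          ring
        rw [e2, e3]

lemma exists_allE (hn : 0 < n) (e : Sym2 (Fin (2 * n + 1)))
    (he : e ∈ (⊤ : SimpleGraph (Fin (2 * n + 1))).edgeSet) :
    ∃ i : ZMod (2 * n), i.val < n ∧ ∃ k ≤ 2 * n, e = allE n i k := by
  induction e using Sym2.ind with
  | _ a b =>
    rw [SimpleGraph.mem_edgeSet, SimpleGraph.top_adj] at he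
    by_cases ha : a = hub n
    · subst ha
      exact exists_allE_hub n hn b (Ne.symm he)
    · by_cases hb : b = hub n
      · subst hb
        rw [Sym2.eq_swap]
        exact exists_allE_hub n hn a he
      · have ha1 := a.isLt
        have ha2 : (a : ℕ) ≠ 2 * n := fun h => ha (Fin.ext h)
        have hb1 := b.isLt
        have hb2 : (b : ℕ) ≠ 2 * n := fun h => hb (Fin.ext h)
        have hxa : toV n (((a : ℕ) : ZMod (2 * n))) = a :=
          Fin.ext (by simp [toV, ZMod.val_cast_of_lt (show (a : ℕ) < 2 * n by omega)])
        have hxb : toV n (((b : ℕ) : ZMod (2 * n))) = b :=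
          Fin.ext (by simp [toV, ZMod.val_cast_of_lt (show (b : ℕ) < 2 * n by omega)])
        rw [← hxa, ← hxb]
        exact exists_allE_inner n hn (fun h => he (by rw [← hxa, ← hxb, h]))

end

end CGHD

/-- For every positive integer `n`, the complete graph `K_{2n+1}` decomposes
into `n` edge-disjoint Hamiltonian cycles: there are `n` Hamiltonian cycles
whose edge sets are pairwise disjoint and whose union is the whole edge set. -/
theorem complete_graph_odd_hamiltonian_decomposition (n : ℕ) (hn : 0 < n) :
    ∃ (a : Fin n → Fin (2 * n + 1))
      (C : ∀ i : Fin n, (⊤ : SimpleGraph (Fin (2 * n + 1))).Walk (a i) (a i)),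
      (∀ i, (C i).IsHamiltonianCycle) ∧
      (∀ i j, i ≠ j → ∀ e : Sym2 (Fin (2 * n + 1)),
          e ∈ (C i).edges → e ∉ (C j).edges) ∧
      (⋃ i : Fin n, {e : Sym2 (Fin (2 * n + 1)) | e ∈ (C i).edges})
        = (⊤ : SimpleGraph (Fin (2 * n + 1))).edgeSet := by
  haveI : NeZero (2 * n) := ⟨by omega⟩
  refine ⟨fun _ => CGHD.hub n, fun i => CGHD.cyc n ((i : ℕ) : ZMod (2 * n)) hn, ?_, ?_, ?_⟩
  · exact fun i => CGHD.isHamiltonianCycle_cyc n _ hn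
  · intro i j hij e hei hej
    rw [CGHD.mem_edges_cyc] at hei hej
    obtain ⟨k, hk, rfl⟩ := hei
    obtain ⟨k', hk', he⟩ := hej
    have hvi : ((((i : ℕ) : ZMod (2 * n)))).val = (i : ℕ) :=
      ZMod.val_cast_of_lt (by omega)
    have hvj : ((((j : ℕ) : ZMod (2 * n)))).val = (j : ℕ) :=
      ZMod.val_cast_of_lt (by omega)
    refine CGHD.allE_disjoint n hn (by rw [hvi]; exact i.isLt) (by rw [hvj]; exact j.isLt)
      ?_ hk hk' he
    intro h
    apply hij
    apply Fin.ext
    have := congrArg ZMod.val h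
    rwa [hvi, hvj] at this
  · apply Set.eq_of_subset_of_subset
    · intro e he
      simp only [Set.mem_iUnion, Set.mem_setOf_eq] at he
      obtain ⟨i, hei⟩ := he
      exact SimpleGraph.Walk.edges_subset_edgeSet _ hei
    · intro e he
      obtain ⟨i, hi, k, hk, rfl⟩ := CGHD.exists_allE n hn e he
      simp only [Set.mem_iUnion, Set.mem_setOf_eq]
      refine ⟨⟨i.val, hi⟩, ?_⟩
      rw [CGHD.mem_edges_cyc]
      refine ⟨k, hk, ?_⟩
      congr 1
      exact (CGHD.castval n i).symm
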